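/- Let B be a nondegenerate alternating bilinear form on a finite-dimensional vector space V over a field k. Every totally isotropic subspace U ⊆ V is contained in a maximal totally isotropic subspace of dimension dim(V)/2, and any two maximal totally isotropic subspaces are conjugate under the symplectic group Sp(V,B). -/

import Mathlib

open Module LinearMap.BilinForm Submodule

section WittAlt

variable {k V : Type*} [Field k] [AddCommGroup V] [Module k V] [FiniteDimensional k V]


lemma ext_aux (B : LinearMap.BilinForm k V) (hB : B.Nondegenerate) (hBa : B.IsAlt)
    (d : ℕ) :
    ∀ U : Submodule k V, finrank k V - finrank k U ≤ d →
      (∀ u ∈ U, ∀ u' ∈ U, B u u' = 0) →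
      ∃ M : Submodule k V, U ≤ M ∧ (∀ u ∈ M, ∀ u' ∈ M, B u u' = 0) ∧
        2 * finrank k M = finrank k V := by
  induction d with
  | zero =>
    intro U hd hU
    have hle : finrank k U ≤ finrank k V := Submodule.finrank_le U
    have hU' : U = ⊤ := Submodule.eq_top_of_finrank_eq (by omega)
    have hzero : ∀ v : V, v = 0 := by
      intro v
      apply hB.1 v
      intro w
      exact hU v (by simp [hU']) w (by simp [hU'])
    have : finrank k V = 0 := by
      have : Subsingleton V := ⟨fun a b => by rw [hzero a, hzero b]⟩
      exact Module.finrank_zero_of_subsingleton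
    exact ⟨⊤, le_top, fun u _ u' _ => by rw [hzero u]; simp, by
      simp [finrank_top, this]⟩
  | succ d ih =>
    intro U hd hU
    by_cases hoc : B.orthogonal U ≤ U
    · -- U = U^⊥, done
      refine ⟨U, le_rfl, hU, ?_⟩
      have hUle : U ≤ B.orthogonal U := fun u hu => by
        intro n hn
        exact hU n hn u hu
      have heq : U = B.orthogonal U := le_antisymm hUle hoc
      have hfr : finrank k (B.orthogonal U) = finrank k V - finrank k U :=
        finrank_orthogonal hB U
      have hle : finrank k U ≤ finrank k V := Submodule.finrank_le U
      rw [← heq] at hfr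
      omega
    · rw [SetLike.not_le_iff_exists] at hoc
      obtain ⟨v, hvo, hvU⟩ := hoc
      set U' := U ⊔ (k ∙ v) with hU'def
      have hvU' : v ∈ U' := Submodule.mem_sup_right (Submodule.mem_span_singleton_self v)
      have hUU' : U ≤ U' := le_sup_left
      have hlt : U < U' := lt_of_le_of_ne hUU' (fun h => hvU (h ▸ hvU'))
      have hiso : ∀ u ∈ U', ∀ u' ∈ U', B u u' = 0 := by
        have key : ∀ u ∈ U', B v u = 0 ∧ ∀ w ∈ U, B w u = 0 := by
          intro u hu
          rw [hU'def, Submodule.mem_sup] at hu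
          obtain ⟨y, hy, z, hz, rfl⟩ := hu
          rw [Submodule.mem_span_singleton] at hz
          obtain ⟨a, rfl⟩ := hz
          constructor
          · have h1 : B v y = 0 := hBa.isRefl y v (hvo y hy)
            simp [h1, hBa v]
          · intro w hw
            have h1 : B w y = 0 := hU w hw y hy
            have h2 : B w v = 0 := hvo w hw
            simp [h1, h2]
        intro u hu u' hu'
        rw [hU'def, Submodule.mem_sup] at hu
        obtain ⟨y, hy, z, hz, rfl⟩ := hu
        rw [Submodule.mem_span_singleton] at hz
        obtain ⟨a, rfl⟩ := hz
        obtain ⟨k1, k2⟩ := key u' hu'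
        simp [LinearMap.add_apply, k1, k2 y hy]
      have hfrlt : finrank k U < finrank k U' := Submodule.finrank_lt_finrank_of_lt hlt
      have hle' : finrank k U' ≤ finrank k V := Submodule.finrank_le U'
      obtain ⟨M, hM1, hM2, hM3⟩ := ih U' (by omega) hiso
      exact ⟨M, hUU'.trans hM1, hM2, hM3⟩




lemma step_aux (B : LinearMap.BilinForm k V) (hB : B.Nondegenerate) (hBa : B.IsAlt)
    (M : Submodule k V) (hM : ∀ u ∈ M, ∀ u' ∈ M, B u u' = 0)
    (hMr : 2 * finrank k M = finrank k V) (hn : finrank k V ≠ 0) :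
    ∃ u v : V, u ∈ M ∧ B u v = 1 ∧ LinearIndependent k ![u, v] ∧
      IsCompl (span k (Set.range ![u, v])) (B.orthogonal (span k (Set.range ![u, v]))) ∧
      (B.restrict (B.orthogonal (span k (Set.range ![u, v])))).Nondegenerate ∧
      finrank k (B.orthogonal (span k (Set.range ![u, v]))) + 2 = finrank k V ∧
      M = (k ∙ u) ⊔ (M ⊓ B.orthogonal (span k (Set.range ![u, v]))) ∧
      2 * finrank k (M.comap (B.orthogonal (span k (Set.range ![u, v]))).subtype) + 2
        = finrank k V := by
  -- pick u ∈ M nonzero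
  have hMne : M ≠ ⊥ := fun h => by
    rw [h] at hMr; simp [finrank_bot] at hMr; omega
  obtain ⟨u, huM, hu0⟩ : ∃ u ∈ M, u ≠ 0 := by
    by_contra h
    push_neg at h
    exact hMne (eq_bot_iff.2 fun x hx => (h x hx) ▸ zero_mem ⊥)
  -- pick v with B u v = 1
  obtain ⟨w, hw⟩ : ∃ w, B u w ≠ 0 := by
    by_contra h
    push_neg at h
    exact hu0 (hB.1 u h)
  set v : V := (B u w)⁻¹ • w with hv
  have huv : B u v = 1 := by
    rw [hv, map_smul, smul_eq_mul, inv_mul_cancel₀ hw]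
  clear_value v
  have hvu : B v u = -1 := by rw [← hBa.neg_eq, huv]
  have huu : B u u = 0 := hBa u
  have hvv : B v v = 0 := hBa v
  set H := span k (Set.range ![u, v]) with hH
  have hHmem : ∀ x, x ∈ H ↔ ∃ a b : k, a • u + b • v = x := by
    intro x
    rw [hH]
    have hr : Set.range ![u, v] = {u, v} := by
      ext y
      constructor
      · rintro ⟨i, rfl⟩
        fin_cases i <;> simp
      · rintro (rfl | rfl)
        · exact ⟨0, rfl⟩
        · exact ⟨1, rfl⟩
    rw [hr, Submodule.mem_span_pair]
  have huH : u ∈ H := (hHmem u).2 ⟨1, 0, by simp⟩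
  have hvH : v ∈ H := (hHmem v).2 ⟨0, 1, by simp⟩
  -- restriction to H is nondegenerate
  have hHnd : (B.restrict H).Nondegenerate := by
    refine LinearMap.BilinForm.Nondegenerate.ofSeparatingLeft ?_
    intro x hx
    obtain ⟨a, b, hab⟩ := (hHmem x).1 x.2
    have h1 := hx ⟨v, hvH⟩
    have h2 := hx ⟨u, huH⟩
    rw [restrict_apply] at h1 h2
    rw [← hab] at h1 h2
    simp only [LinearMap.domRestrict_apply, map_add, map_smul, LinearMap.add_apply,
      LinearMap.smul_apply, huu, huv, hvu, hvv, smul_eq_mul, mul_zero, mul_one,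
      mul_neg, add_zero, zero_add] at h1 h2
    have ha : a = 0 := h1
    have hb : b = 0 := by simpa using h2
    ext
    rw [← hab, ha, hb]; simp
  set W := B.orthogonal H with hWdef
  have hcompl : IsCompl H W :=
    isCompl_orthogonal_of_restrict_nondegenerate hBa.isRefl hHnd
  -- linear independence for finrank H = 2
  have hli : LinearIndependent k ![u, v] := by
    rw [LinearIndependent.pair_iff]
    intro s t hst
    have h1 : B u (s • u + t • v) = 0 := by rw [hst]; simp
    have h2 : B (s • u + t • v) v = 0 := by rw [hst]; simp
    simp only [map_add, map_smul, LinearMap.add_apply, LinearMap.smul_apply,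
      huu, huv, hvv, smul_eq_mul, mul_zero, mul_one, add_zero, zero_add] at h1 h2
    exact ⟨h2, h1⟩
  have hfrH : finrank k H = 2 := by
    rw [hH, finrank_span_eq_card hli]
    simp
  have hfrW : finrank k W = finrank k V - 2 := by
    rw [hWdef, finrank_orthogonal hB, hfrH]
  have h2n : 2 ≤ finrank k V := by
    have := Submodule.finrank_le H
    omega
  -- restriction to W nondegenerate
  have hWnd : (B.restrict W).Nondegenerate := by
    refine LinearMap.BilinForm.Nondegenerate.ofSeparatingLeft ?_
    intro x hx
    have hxV : ∀ y : V, B (x : V) y = 0 := by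
      intro y
      have hy : y ∈ H ⊔ W := by rw [hcompl.sup_eq_top]; trivial
      rw [Submodule.mem_sup] at hy
      obtain ⟨h, hh, z, hz, rfl⟩ := hy
      have hBh : B (x : V) h = 0 := hBa.isRefl h x (x.2 h hh)
      have hBz : B (x : V) z = 0 := by
        have := hx ⟨z, hz⟩
        rwa [restrict_apply] at this
      rw [map_add, hBh, hBz, add_zero]
    ext
    exact hB.1 x hxV
  -- decomposition of M
  have hdecomp : M = (k ∙ u) ⊔ (M ⊓ W) := by
    apply le_antisymm
    · intro m hm
      set m' := m + (B v m) • u with hm'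
      have hm'W : m' ∈ W := by
        intro h hh
        obtain ⟨a, b, hab⟩ := (hHmem h).1 hh
        show B h m' = 0
        have hum : B u m = 0 := hM u huM m hm
        have hvm' : B v m' = 0 := by
          rw [hm', map_add, map_smul, hvu, smul_eq_mul]
          ring
        have hum' : B u m' = 0 := by
          rw [hm', map_add, map_smul, huu, hum, smul_eq_mul]
          ring
        rw [← hab]
        simp only [map_add, map_smul, LinearMap.add_apply, LinearMap.smul_apply,
          hum', hvm', smul_eq_mul, mul_zero, add_zero]
      have hm'M : m' ∈ M := M.add_mem hm (M.smul_mem _ huM)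
      have : m = (-(B v m)) • u + m' := by rw [hm']; module
      rw [this]
      exact Submodule.add_mem _
        (Submodule.mem_sup_left (Submodule.smul_mem _ _ (Submodule.mem_span_singleton_self u)))
        (Submodule.mem_sup_right ⟨hm'M, hm'W⟩)
    · apply sup_le
      · rwa [Submodule.span_singleton_le_iff_mem]
      · exact inf_le_left
  -- span u ⊓ (M ⊓ W) = ⊥
  have hinf : (k ∙ u) ⊓ (M ⊓ W) = ⊥ := by
    rw [eq_bot_iff]
    intro x hx
    rw [Submodule.mem_inf, Submodule.mem_inf] at hx
    obtain ⟨hx1, _, hx3⟩ := hx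
    rw [Submodule.mem_span_singleton] at hx1
    obtain ⟨c, rfl⟩ := hx1
    have h0 : B v (c • u) = 0 := hx3 v hvH
    rw [map_smul, hvu, smul_eq_mul] at h0
    have hc : c = 0 := by simpa using h0
    simp [hc]
  have hfr1 : finrank k (k ∙ u) = 1 := finrank_span_singleton hu0
  have hsum := Submodule.finrank_sup_add_finrank_inf_eq (k ∙ u) (M ⊓ W)
  rw [hinf, finrank_bot, add_zero, hfr1, ← hdecomp] at hsum
  -- comap = inf via equiv
  have hcomap : M.comap W.subtype = (M ⊓ W).comap W.subtype := by
    ext x; simp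
  have hfrcomap : finrank k (M.comap W.subtype) = finrank k (M ⊓ W : Submodule k V) := by
    rw [hcomap]
    exact (Submodule.comapSubtypeEquivOfLe inf_le_right).finrank_eq
  refine ⟨u, v, huM, huv, hli, hcompl, hWnd, ?_, hdecomp, ?_⟩
  · show finrank k W + 2 = finrank k V
    omega
  · show 2 * finrank k (M.comap W.subtype) + 2 = finrank k V
    omega

end WittAlt

section Conj

universe u u'

variable {k : Type*} [Field k]

set_option maxHeartbeats 2000000 in
theorem conj_aux (n : ℕ) (V₁ : Type u) (V₂ : Type u')
    [AddCommGroup V₁] [Module k V₁] [FiniteDimensional k V₁]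
    [AddCommGroup V₂] [Module k V₂] [FiniteDimensional k V₂]
    (B₁ : LinearMap.BilinForm k V₁) (B₂ : LinearMap.BilinForm k V₂)
    (hB₁ : B₁.Nondegenerate) (hBa₁ : B₁.IsAlt)
    (hB₂ : B₂.Nondegenerate) (hBa₂ : B₂.IsAlt)
    (hn₁ : finrank k V₁ = n) (hn₂ : finrank k V₂ = n)
    (M₁ : Submodule k V₁) (M₂ : Submodule k V₂)
    (hM₁ : ∀ u ∈ M₁, ∀ u' ∈ M₁, B₁ u u' = 0)
    (hM₂ : ∀ u ∈ M₂, ∀ u' ∈ M₂, B₂ u u' = 0)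
    (hr₁ : 2 * finrank k M₁ = n) (hr₂ : 2 * finrank k M₂ = n) :
    ∃ e : V₁ ≃ₗ[k] V₂, (∀ x y, B₂ (e x) (e y) = B₁ x y) ∧
      M₁.map (e : V₁ →ₗ[k] V₂) = M₂ := by
  by_cases hn : n = 0
  · subst hn
    have hs₁ : Subsingleton V₁ := by
      rw [← Module.finrank_zero_iff (R := k)]; omega
    have hs₂ : Subsingleton V₂ := by
      rw [← Module.finrank_zero_iff (R := k)]; omega
    refine ⟨LinearEquiv.ofFinrankEq _ _ (by omega), fun x y => ?_, Subsingleton.elim _ _⟩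
    rw [Subsingleton.elim x 0, Subsingleton.elim y 0]
    simp
  · obtain ⟨u₁, v₁, hu₁M, huv₁, hli₁, hcompl₁, hWnd₁, hfrW₁, hdec₁, hrk₁⟩ :=
      step_aux B₁ hB₁ hBa₁ M₁ hM₁ (by omega) (by omega)
    obtain ⟨u₂, v₂, hu₂M, huv₂, hli₂, hcompl₂, hWnd₂, hfrW₂, hdec₂, hrk₂⟩ :=
      step_aux B₂ hB₂ hBa₂ M₂ hM₂ (by omega) (by omega)
    set H₁ := span k (Set.range ![u₁, v₁]) with hH₁
    set W₁ := B₁.orthogonal H₁ with hW₁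
    set H₂ := span k (Set.range ![u₂, v₂]) with hH₂
    set W₂ := B₂.orthogonal H₂ with hW₂
    -- restricted data
    have hBa₁' : (B₁.restrict W₁).IsAlt := fun x => hBa₁ x
    have hBa₂' : (B₂.restrict W₂).IsAlt := fun x => hBa₂ x
    set N₁ := M₁.comap W₁.subtype with hN₁
    set N₂ := M₂.comap W₂.subtype with hN₂
    have hN₁iso : ∀ x ∈ N₁, ∀ y ∈ N₁, (B₁.restrict W₁) x y = 0 := by
      intro x hx y hy
      rw [restrict_apply]
      exact hM₁ x hx y hy
    have hN₂iso : ∀ x ∈ N₂, ∀ y ∈ N₂, (B₂.restrict W₂) x y = 0 := by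
      intro x hx y hy
      rw [restrict_apply]
      exact hM₂ x hx y hy
    obtain ⟨e', he'B, he'M⟩ := conj_aux (n - 2) W₁ W₂ (B₁.restrict W₁) (B₂.restrict W₂)
      hWnd₁ hBa₁' hWnd₂ hBa₂' (by omega) (by omega) N₁ N₂ hN₁iso hN₂iso
      (by omega) (by omega)
    -- basis equivalence on H
    set b₁ : Basis (Fin 2) k H₁ := Basis.span hli₁ with hb₁
    set b₂ : Basis (Fin 2) k H₂ := Basis.span hli₂ with hb₂
    set eH : H₁ ≃ₗ[k] H₂ := b₁.equiv b₂ (Equiv.refl _) with heH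
    set φ₁ := Submodule.prodEquivOfIsCompl H₁ W₁ hcompl₁ with hφ₁
    set φ₂ := Submodule.prodEquivOfIsCompl H₂ W₂ hcompl₂ with hφ₂
    set e : V₁ ≃ₗ[k] V₂ := (φ₁.symm.trans (LinearEquiv.prodCongr eH e')).trans φ₂ with he
    -- basic computation lemmas
    have hb₁0 : (b₁ 0 : V₁) = u₁ := Basis.coe_span_apply hli₁ 0
    have hb₁1 : (b₁ 1 : V₁) = v₁ := Basis.coe_span_apply hli₁ 1
    have hb₂0 : (b₂ 0 : V₂) = u₂ := Basis.coe_span_apply hli₂ 0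
    have hb₂1 : (b₂ 1 : V₂) = v₂ := Basis.coe_span_apply hli₂ 1
    have heH0 : eH (b₁ 0) = b₂ 0 := by rw [heH, Basis.equiv_apply]; rfl
    have heH1 : eH (b₁ 1) = b₂ 1 := by rw [heH, Basis.equiv_apply]; rfl
    have hv₁u₁ : B₁ v₁ u₁ = -1 := by rw [← hBa₁.neg_eq, huv₁]
    have hv₂u₂ : B₂ v₂ u₂ = -1 := by rw [← hBa₂.neg_eq, huv₂]
    -- eH preserves the form
    have hBH : ∀ a c : H₁, B₂ (eH a : V₂) (eH c : V₂) = B₁ (a : V₁) (c : V₁) := by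
      intro a c
      have ha := b₁.sum_repr a
      rw [Fin.sum_univ_two] at ha
      have hc := b₁.sum_repr c
      rw [Fin.sum_univ_two] at hc
      rw [← ha, ← hc]
      simp only [map_add, map_smul, LinearMap.add_apply, LinearMap.smul_apply,
        Submodule.coe_add, Submodule.coe_smul, heH0, heH1, hb₁0, hb₁1, hb₂0, hb₂1,
        smul_eq_mul]
      rw [huv₁, huv₂, hv₁u₁, hv₂u₂, hBa₁ u₁, hBa₁ v₁, hBa₂ u₂, hBa₂ v₂]
    -- decomposition formulas for e
    have hφ₁app : ∀ x : V₁, ((φ₁.symm x).1 : V₁) + ((φ₁.symm x).2 : V₁) = x := by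
      intro x
      exact (Submodule.coe_prodEquivOfIsCompl' H₁ W₁ hcompl₁ _).symm.trans (φ₁.apply_symm_apply x)
    have heapp : ∀ x : V₁, e x = (eH (φ₁.symm x).1 : V₂) + (e' (φ₁.symm x).2 : V₂) := by
      intro x
      rw [he]
      simp only [LinearEquiv.trans_apply, LinearEquiv.prodCongr_apply]
      exact Submodule.coe_prodEquivOfIsCompl' H₂ W₂ hcompl₂ _
    have cross₁ : ∀ (h : H₁) (w : W₁), B₁ (h : V₁) (w : V₁) = 0 := fun h w => w.2 h h.2
    have cross₁' : ∀ (w : W₁) (h : H₁), B₁ (w : V₁) (h : V₁) = 0 :=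
      fun w h => hBa₁.isRefl _ _ (cross₁ h w)
    have cross₂ : ∀ (h : H₂) (w : W₂), B₂ (h : V₂) (w : V₂) = 0 := fun h w => w.2 h h.2
    have cross₂' : ∀ (w : W₂) (h : H₂), B₂ (w : V₂) (h : V₂) = 0 :=
      fun w h => hBa₂.isRefl _ _ (cross₂ h w)
    have hpres : ∀ x y, B₂ (e x) (e y) = B₁ x y := by
      intro x y
      rw [heapp x, heapp y]
      conv_rhs => rw [← hφ₁app x, ← hφ₁app y]
      simp only [map_add, LinearMap.add_apply]
      rw [cross₂ _ _, cross₂' _ _, cross₁ _ _, cross₁' _ _, hBH]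
      have h := he'B (φ₁.symm x).2 (φ₁.symm y).2
      simp only [restrict_apply, LinearMap.domRestrict_apply] at h
      rw [h]
    -- action on distinguished vectors
    have hu₁H : u₁ ∈ H₁ := subset_span ⟨0, rfl⟩
    have heu : e u₁ = u₂ := by
      have h1 : φ₁.symm u₁ = (⟨u₁, hu₁H⟩, 0) :=
        Submodule.prodEquivOfIsCompl_symm_apply_left H₁ W₁ hcompl₁ ⟨u₁, hu₁H⟩
      have h2 : (⟨u₁, hu₁H⟩ : H₁) = b₁ 0 := Subtype.ext hb₁0.symm
      rw [he]
      simp only [LinearEquiv.trans_apply, LinearEquiv.prodCongr_apply, h1, h2, heH0, map_zero]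
      rw [Submodule.coe_prodEquivOfIsCompl' H₂ W₂ hcompl₂]
      simp [hb₂0]
    have hew : ∀ w : W₁, e (w : V₁) = (e' w : V₂) := by
      intro w
      have h1 : φ₁.symm (w : V₁) = (0, w) :=
        Submodule.prodEquivOfIsCompl_symm_apply_right H₁ W₁ hcompl₁ w
      rw [he]
      simp only [LinearEquiv.trans_apply, LinearEquiv.prodCongr_apply, h1, map_zero]
      rw [Submodule.coe_prodEquivOfIsCompl' H₂ W₂ hcompl₂]
      simp
    -- the map property
    have hmap : M₁.map (e : V₁ →ₗ[k] V₂) = M₂ := by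
      rw [hdec₁, Submodule.map_sup]
      have hspan : (k ∙ u₁).map (e : V₁ →ₗ[k] V₂) = (k ∙ u₂) := by
        rw [Submodule.map_span, Set.image_singleton]
        congr 1
        rw [LinearEquiv.coe_coe, heu]
      have hinf : (M₁ ⊓ W₁).map (e : V₁ →ₗ[k] V₂) = M₂ ⊓ W₂ := by
        ext y
        simp only [Submodule.mem_map, LinearEquiv.coe_coe]
        constructor
        · rintro ⟨x, hx, rfl⟩
          have hxW : x ∈ W₁ := hx.2
          have hxN : (⟨x, hxW⟩ : W₁) ∈ N₁ := by
            rw [hN₁, Submodule.mem_comap]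
            exact hx.1
          have h2 : e' ⟨x, hxW⟩ ∈ N₂ := he'M ▸ Submodule.mem_map_of_mem hxN
          rw [hN₂, Submodule.mem_comap] at h2
          rw [show x = ((⟨x, hxW⟩ : W₁) : V₁) from rfl, hew]
          exact ⟨h2, (e' ⟨x, hxW⟩).2⟩
        · intro hy
          have hyW : y ∈ W₂ := hy.2
          have hyN : (⟨y, hyW⟩ : W₂) ∈ N₂ := by
            rw [hN₂, Submodule.mem_comap]
            exact hy.1
          rw [← he'M, Submodule.mem_map] at hyN
          obtain ⟨x, hxN, hx⟩ := hyN
          rw [hN₁, Submodule.mem_comap] at hxN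
          refine ⟨(x : V₁), ⟨hxN, x.2⟩, ?_⟩
          rw [hew x]
          exact congrArg Subtype.val hx
      rw [hspan, hinf, ← hdec₂]
    exact ⟨e, hpres, hmap⟩
termination_by n
decreasing_by omega

end Conj

/-- Witt extension for alternating forms: for a nondegenerate
alternating bilinear form `B` on a finite-dimensional space `V`, every totally
isotropic subspace is contained in a totally isotropic subspace of dimension
`dim V / 2` (necessarily maximal), and any two totally isotropic subspaces of
dimension `dim V / 2` are conjugate under the symplectic group `Sp(V, B)`. -/
theorem stmt18 (k V : Type*) [Field k] [AddCommGroup V] [Module k V]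
    [FiniteDimensional k V]
    (B : LinearMap.BilinForm k V) (hB : B.Nondegenerate) (hBa : B.IsAlt) :
    (∀ U : Submodule k V, (∀ u ∈ U, ∀ u' ∈ U, B u u' = 0) →
      ∃ M : Submodule k V, U ≤ M ∧ (∀ u ∈ M, ∀ u' ∈ M, B u u' = 0) ∧
        Module.finrank k M = Module.finrank k V / 2) ∧
    (∀ M₁ M₂ : Submodule k V,
      (∀ u ∈ M₁, ∀ u' ∈ M₁, B u u' = 0) →
      Module.finrank k M₁ = Module.finrank k V / 2 →
      (∀ u ∈ M₂, ∀ u' ∈ M₂, B u u' = 0) →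
      Module.finrank k M₂ = Module.finrank k V / 2 →
      ∃ e : V ≃ₗ[k] V, (∀ v w, B (e v) (e w) = B v w) ∧
        M₁.map (e : V →ₗ[k] V) = M₂) := by
  constructor
  · intro U hU
    obtain ⟨M, hUM, hMiso, hMr⟩ :=
      ext_aux B hB hBa (finrank k V) U (by omega) hU
    exact ⟨M, hUM, hMiso, by omega⟩
  · intro M₁ M₂ h₁ hd₁ h₂ hd₂
    obtain ⟨M', _, _, hMr'⟩ :=
      ext_aux B hB hBa (finrank k V) M₁ (by omega) h₁
    have hr₁ : 2 * finrank k M₁ = finrank k V := by omega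
    have hr₂ : 2 * finrank k M₂ = finrank k V := by omega
    obtain ⟨e, hpres, hmap⟩ := conj_aux (finrank k V) V V B B hB hBa hB hBa rfl rfl
      M₁ M₂ h₁ h₂ hr₁ hr₂
    exact ⟨e, hpres, hmap⟩
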